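/- Let d ≥ 2 and n ≥ d + 1. Every d-disjunctive t×n binary code C is a strongly d-separable matrix: for every D0 ⊆ {1,…,n} with |D0| = d, the intersection of all sets D' ⊆ {1,…,n} whose Boolean sum of columns equals the Boolean sum of the columns indexed by D0 is exactly D0. -/

import Mathlib

open Finset

/-- The Boolean sum (componentwise OR) of the columns of `C` indexed by `S`. -/
noncomputable def boolSum {t n : ℕ} (C : Fin t → Fin n → Bool) (S : Finset (Fin n)) : Fin t → Bool :=
  fun r => S.sup fun i => C r i

/-- `covers x y` : the vector `x` covers the vector `y`, i.e. `x ∨ y = x`. -/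
def covers {t : ℕ} (x y : Fin t → Bool) : Prop := ∀ r, y r = true → x r = true

instance {t : ℕ} (x y : Fin t → Bool) : Decidable (covers x y) := by
  unfold covers; infer_instance

/-- `C` is `d`-disjunctive: the Boolean sum of any `d` columns covers no other column. -/
def Disjunctive {t n : ℕ} (d : ℕ) (C : Fin t → Fin n → Bool) : Prop :=
  ∀ D : Finset (Fin n), D.card = d → ∀ j ∉ D, ¬ covers (boolSum C D) (fun i => C i j)

/-- `C` is a strongly `d`-separable matrix. -/
def SSM {t n : ℕ} (d : ℕ) (C : Fin t → Fin n → Bool) : Prop :=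
  ∀ D0 : Finset (Fin n), D0.card = d →
    {i : Fin n | ∀ D' : Finset (Fin n), boolSum C D' = boolSum C D0 → i ∈ D'} = ↑D0

/-- `C` is a `(=d)`-union-free code. -/
def UnionFreeEq {t n : ℕ} (d : ℕ) (C : Fin t → Fin n → Bool) : Prop :=
  ∀ D1 D2 : Finset (Fin n), D1.card = d → D2.card = d → D1 ≠ D2 →
    boolSum C D1 ≠ boolSum C D2

/-- `C` is a `(≤d)`-union-free code. -/
def UnionFreeLe {t n : ℕ} (d : ℕ) (C : Fin t → Fin n → Bool) : Prop :=
  ∀ D1 D2 : Finset (Fin n), D1.card ≤ d → D2.card ≤ d → D1 ≠ D2 →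
    boolSum C D1 ≠ boolSum C D2

/-- The number of columns of `C` covered by the vector `r`. -/
def coveredCount {t n : ℕ} (C : Fin t → Fin n → Bool) (r : Fin t → Bool) : ℕ :=
  (Finset.univ.filter fun j : Fin n => covers r (fun i => C i j)).card

/-- `C` is a `(=d)`-union-free code with fast decoding. -/
def UFFDEq {t n : ℕ} (d : ℕ) (C : Fin t → Fin n → Bool) : Prop :=
  UnionFreeEq d C ∧
    ∀ D : Finset (Fin n), D.card = d →
      (coveredCount C (boolSum C D) : ℝ) ≤ (n : ℝ) ^ ((1 : ℝ) / d)

/-- `C` is a `(≤d)`-union-free code with fast decoding. -/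
def UFFDLe {t n : ℕ} (d : ℕ) (C : Fin t → Fin n → Bool) : Prop :=
  UnionFreeLe d C ∧
    ∀ D : Finset (Fin n), D.card ≤ d →
      (coveredCount C (boolSum C D) : ℝ) ≤ (n : ℝ) ^ ((1 : ℝ) / d)

lemma covers_boolSum_of_mem {t n : ℕ} (C : Fin t → Fin n → Bool) {S : Finset (Fin n)}
    {j : Fin n} (hj : j ∈ S) : covers (boolSum C S) (fun r => C r j) := by
  intro r hr
  have h := Finset.le_sup (f := fun i => C r i) hj
  rw [show C r j = true from hr] at h
  simpa [boolSum] using top_le_iff.mp h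

lemma covers_boolSum_mono {t n : ℕ} (C : Fin t → Fin n → Bool) {S T : Finset (Fin n)}
    (h : S ⊆ T) : covers (boolSum C T) (boolSum C S) := by
  intro r hr
  have := Finset.sup_mono (f := fun i => C r i) h
  simpa [boolSum, hr] using Bool.le_iff_imp.mp this hr

/-- Every `d`-disjunctive code is a strongly `d`-separable matrix. -/
theorem disjunctive_isSSM {t n d : ℕ} (hd : 2 ≤ d) (hn : d + 1 ≤ n)
    (C : Fin t → Fin n → Bool) (hC : Disjunctive d C) : SSM d C := by
  intro D0 hD0
  ext i
  simp only [Set.mem_setOf_eq, Finset.coe_mem, Finset.mem_coe]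
  constructor
  · intro h; exact h D0 rfl
  · intro hi D' hsum
    -- D' ⊆ D0
    have hsub : D' ⊆ D0 := by
      intro j hj
      by_contra hjD0
      exact hC D0 hD0 j hjD0 (fun r hr => hsum ▸ covers_boolSum_of_mem C hj r hr)
    by_contra hiD'
    have hsub' : D' ⊆ Finset.univ.erase i := by
      intro j hj
      exact Finset.mem_erase.mpr ⟨fun e => hiD' (e ▸ hj), Finset.mem_univ j⟩
    have hcard : D'.card ≤ d := hD0 ▸ Finset.card_le_card hsub
    have hcard2 : d ≤ (Finset.univ.erase i : Finset (Fin n)).card := by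
      rw [Finset.card_erase_of_mem (Finset.mem_univ i), Finset.card_univ, Fintype.card_fin]
      omega
    obtain ⟨E, hDE, hEsub, hE⟩ := Finset.exists_subsuperset_card_eq hsub' hcard hcard2
    have hiE : i ∉ E := fun h => (Finset.mem_erase.mp (hEsub h)).1 rfl
    apply hC E hE i hiE
    intro r hr
    have h1 : boolSum C D' r = true := hsum ▸ covers_boolSum_of_mem C hi r hr
    exact covers_boolSum_mono C hDE r h1
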